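/- arXiv:1408.4867 — 2 statements merged into one kernel-verified Lean document; each statement's English description precedes it below -/
import Mathlib

section
/- Let X be a separable F-space and T a continuous linear operator on X. Then T ⊕ T is hypercyclic on X × X if and only if for all non-empty open sets U₁, V₁, U₂, V₂ of X, the return sets satisfy N(U₁,V₁) ∩ N(U₂,V₂) ≠ ∅, where N(U,V) = {n ∈ ℕ : T^n(U) ∩ V ≠ ∅}. -/
open Filter Topology Set
open scoped Classical

/-- The lower density of a set of natural numbers:
`liminf_{N→∞} |A ∩ [1,N]| / N`. -/
noncomputable def lowerDensity (A : Set ℕ) : ℝ :=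
  Filter.liminf
    (fun N : ℕ => (((Finset.Icc 1 N).filter (fun n => n ∈ A)).card : ℝ) / N)
    Filter.atTop

lemma prodMap_pow_apply {X : Type*} [AddCommGroup X] [Module ℝ X] [TopologicalSpace X]
    [IsTopologicalAddGroup X] (T : X →L[ℝ] X) (n : ℕ) (z : X × X) :
    ((T.prodMap T) ^ n) z = ((T ^ n) z.1, (T ^ n) z.2) := by
  induction n generalizing z with
  | zero => simp
  | succ n ih =>
    rw [pow_succ, ContinuousLinearMap.mul_apply, ih]
    simp [pow_succ, ContinuousLinearMap.mul_apply]

lemma open_infinite {Y : Type*} [AddCommGroup Y] [Module ℝ Y] [TopologicalSpace Y]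
    [IsTopologicalAddGroup Y] [ContinuousSMul ℝ Y] (y₀ : Y) (hy : y₀ ≠ 0)
    {W : Set Y} (hW : IsOpen W) (hne : W.Nonempty) : W.Infinite := by
  obtain ⟨w, hw⟩ := hne
  set f : ℝ → Y := fun t => t • y₀ + w with hf
  have hcont : Continuous f := by continuity
  have hinj : Function.Injective f := by
    intro s t hst
    have : (s - t) • y₀ = 0 := by
      rw [sub_smul, sub_eq_zero]
      have := add_right_cancel hst
      exact this
    rcases smul_eq_zero.1 this with h | h
    · linarith [sub_eq_zero.1 (by exact_mod_cast h)]
    · exact absurd h hy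
  have h0 : (0 : ℝ) ∈ f ⁻¹' W := by simp [hf, hw]
  have hopen : IsOpen (f ⁻¹' W) := hW.preimage hcont
  obtain ⟨ε, hε, hball⟩ := Metric.isOpen_iff.1 hopen 0 h0
  have hio : (Set.Ioo (-ε) ε).Infinite := Set.Ioo_infinite (by linarith)
  have hsub : Set.Ioo (-ε) ε ⊆ f ⁻¹' W := by
    intro t ht
    apply hball
    rw [Real.ball_eq_Ioo]
    simpa using ht
  have : (f '' Set.Ioo (-ε) ε).Infinite := (hio.image (hinj.injOn))
  exact this.mono (by rintro y ⟨t, ht, rfl⟩; exact hsub ht)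

/-- `T ⊕ T` is hypercyclic iff all pairs of return sets intersect. -/
theorem stmt_4 {X : Type*} [AddCommGroup X] [Module ℝ X] [MetricSpace X]
    [CompleteSpace X] [TopologicalSpace.SeparableSpace X]
    [IsTopologicalAddGroup X] [ContinuousSMul ℝ X]
    (T : X →L[ℝ] X) :
    (∃ z : X × X, Dense (Set.range fun n : ℕ => ((T.prodMap T) ^ n) z)) ↔
      (∀ U₁ V₁ U₂ V₂ : Set X, IsOpen U₁ → IsOpen V₁ → IsOpen U₂ → IsOpen V₂ →
        U₁.Nonempty → V₁.Nonempty → U₂.Nonempty → V₂.Nonempty →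
        ({n : ℕ | ((T ^ n) '' U₁ ∩ V₁).Nonempty} ∩
          {n : ℕ | ((T ^ n) '' U₂ ∩ V₂).Nonempty}).Nonempty) := by
  constructor
  · rintro ⟨z, hz⟩ U₁ V₁ U₂ V₂ hU₁ hV₁ hU₂ hV₂ hU₁n hV₁n hU₂n hV₂n
    by_cases htriv : ∀ x : X, x = 0
    · refine ⟨0, ?_, ?_⟩
      · obtain ⟨u, hu⟩ := hU₁n
        obtain ⟨v, hv⟩ := hV₁n
        exact ⟨u, ⟨u, hu, by simp⟩, by rw [htriv u, ← htriv v]; exact hv⟩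
      · obtain ⟨u, hu⟩ := hU₂n
        obtain ⟨v, hv⟩ := hV₂n
        exact ⟨u, ⟨u, hu, by simp⟩, by rw [htriv u, ← htriv v]; exact hv⟩
    push_neg at htriv
    obtain ⟨x₀, hx₀⟩ := htriv
    set g : ℕ → X × X := fun n => ((T.prodMap T) ^ n) z with hg
    -- step 1: find m with g m ∈ U₁ ×ˢ U₂
    obtain ⟨p, ⟨m, rfl⟩, hpm⟩ := hz.exists_mem_open (hU₁.prod hU₂) (hU₁n.prod hU₂n)
    -- step 2: find n ≥ m with g n ∈ V₁ ×ˢ V₂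
    set F : Set (X × X) := (fun k => ((T.prodMap T) ^ k) z) '' (Set.Iio m) with hF
    have hFfin : F.Finite := (Set.finite_Iio m).image _
    have hVopen : IsOpen ((V₁ ×ˢ V₂) \ F) := (hV₁.prod hV₂).sdiff hFfin.isClosed
    have hVinf : ((V₁ ×ˢ V₂) : Set (X × X)).Infinite :=
      open_infinite (x₀, x₀) (by simp [hx₀]) (hV₁.prod hV₂) (hV₁n.prod hV₂n)
    have hVne : (((V₁ ×ˢ V₂) : Set (X × X)) \ F).Nonempty :=
      (hVinf.diff hFfin).nonempty
    obtain ⟨q, ⟨n, rfl⟩, hq⟩ := hz.exists_mem_open hVopen hVne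
    have hnm : m ≤ n := by
      by_contra h
      exact hq.2 ⟨n, Set.mem_Iio.2 (lt_of_not_ge h), rfl⟩
    refine ⟨n - m, ?_, ?_⟩
    · refine ⟨(T ^ n) z.1, ⟨((T.prodMap T) ^ m) z |>.1, ?_, ?_⟩, ?_⟩
      · exact hpm.1
      · rw [prodMap_pow_apply]
        have : (T ^ (n - m)) ((T ^ m) z.1) = (T ^ n) z.1 := by
          rw [← ContinuousLinearMap.mul_apply, ← pow_add, Nat.sub_add_cancel hnm]
        simpa using this
      · have := hq.1.1
        simp only [hg, prodMap_pow_apply] at this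
        exact this
    · refine ⟨(T ^ n) z.2, ⟨((T.prodMap T) ^ m) z |>.2, ?_, ?_⟩, ?_⟩
      · exact hpm.2
      · rw [prodMap_pow_apply]
        have : (T ^ (n - m)) ((T ^ m) z.2) = (T ^ n) z.2 := by
          rw [← ContinuousLinearMap.mul_apply, ← pow_add, Nat.sub_add_cancel hnm]
        simpa using this
      · have := hq.1.2
        simp only [hg, prodMap_pow_apply] at this
        exact this
  · intro h
    -- Birkhoff transitivity
    obtain ⟨b, hbcount, hbne, hbasis⟩ :=
      TopologicalSpace.exists_countable_basis (X × X)
    set D : Set (X × X) → Set (X × X) :=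
      fun B => ⋃ n : ℕ, (fun z => ((T.prodMap T) ^ n) z) ⁻¹' B with hD
    have hDopen : ∀ B ∈ b, IsOpen (D B) := fun B hB =>
      isOpen_iUnion fun n => (hbasis.isOpen hB).preimage ((T.prodMap T ^ n).continuous)
    have hDdense : ∀ B ∈ b, Dense (D B) := by
      intro B hB
      rw [dense_iff_inter_open]
      rintro U hU ⟨⟨a, c⟩, hac⟩
      obtain ⟨u, v, hu, hv, ha, hc, huv⟩ := isOpen_prod_iff.1 hU a c hac
      have hBne : B.Nonempty := by
        rcases Set.eq_empty_or_nonempty B with rfl | hne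
        · exact absurd hB hbne
        · exact hne
      obtain ⟨⟨a', c'⟩, hac'⟩ := hBne
      obtain ⟨u', v', hu', hv', ha', hc', huv'⟩ :=
        isOpen_prod_iff.1 (hbasis.isOpen hB) a' c' hac'
      obtain ⟨n, hn₁, hn₂⟩ := h u u' v v' hu hu' hv hv' ⟨a, ha⟩ ⟨a', ha'⟩ ⟨c, hc⟩ ⟨c', hc'⟩
      obtain ⟨y₁, ⟨x₁, hx₁, rfl⟩, hy₁⟩ := hn₁
      obtain ⟨y₂, ⟨x₂, hx₂, rfl⟩, hy₂⟩ := hn₂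
      refine ⟨(x₁, x₂), huv ⟨hx₁, hx₂⟩, Set.mem_iUnion.2 ⟨n, ?_⟩⟩
      show ((T.prodMap T) ^ n) (x₁, x₂) ∈ B
      rw [prodMap_pow_apply]
      exact huv' ⟨hy₁, hy₂⟩
    have hGdelta : Dense (⋂₀ (D '' b)) := by
      apply dense_sInter_of_isOpen
      · rintro s ⟨B, hB, rfl⟩; exact hDopen B hB
      · exact hbcount.image _
      · rintro s ⟨B, hB, rfl⟩; exact hDdense B hB
    obtain ⟨z, hzmem⟩ := hGdelta.nonempty
    refine ⟨z, ?_⟩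
    rw [hbasis.dense_iff]
    intro o ho hone
    have : z ∈ D o := hzmem (D o) ⟨o, ho, rfl⟩
    obtain ⟨n, hn⟩ := Set.mem_iUnion.1 this
    exact ⟨((T.prodMap T) ^ n) z, hn, ⟨n, rfl⟩⟩
end

section
/- Let X be a separable F-space and T a continuous linear operator on X. If T ⊕ T is hypercyclic on X × X, then for every n ≥ 2 the n-fold direct sum T ⊕ T ⊕ ⋯ ⊕ T is hypercyclic on X^n (Furstenberg's theorem in the linear setting). -/
open Filter Topology Set
open scoped Classical

section Dyn
variable {Y : Type*} [TopologicalSpace Y] {f : Y → Y}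

/-- Topological transitivity. -/
def TTrans (f : Y → Y) : Prop :=
  ∀ U V : Set Y, IsOpen U → U.Nonempty → IsOpen V → V.Nonempty →
    ∃ n : ℕ, (U ∩ f^[n] ⁻¹' V).Nonempty

/-- Birkhoff transitivity theorem. -/
theorem TTrans.exists_dense_orbit [Nonempty Y] [BaireSpace Y] [SecondCountableTopology Y]
    (hf : Continuous f) (ht : TTrans f) :
    ∃ y : Y, Dense (Set.range fun k : ℕ => f^[k] y) := by
  obtain ⟨B, hBc, -, hB⟩ := TopologicalSpace.exists_countable_basis Y
  set P := {V : Set Y // V ∈ B ∧ V.Nonempty}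
  have : Countable P := (hBc.mono (by intro x hx; exact hx.1)).to_subtype
  have hdense : Dense (⋂ V : P, ⋃ k : ℕ, f^[k] ⁻¹' V.1) := by
    refine dense_iInter_of_isOpen (fun V => isOpen_iUnion fun k => ?_) (fun V => ?_)
    · exact (hf.iterate k).isOpen_preimage _ (hB.isOpen V.2.1)
    · rw [dense_iff_inter_open]
      intro U hU hUne
      obtain ⟨n, x, hxU, hxV⟩ := ht U V.1 hU hUne (hB.isOpen V.2.1) V.2.2
      exact ⟨x, hxU, mem_iUnion.2 ⟨n, hxV⟩⟩
  obtain ⟨y, hy⟩ := hdense.nonempty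
  refine ⟨y, hB.dense_iff.2 fun o ho hone => ?_⟩
  obtain ⟨k, hk⟩ := mem_iUnion.1 (mem_iInter.1 hy ⟨o, ho, hone⟩)
  exact ⟨f^[k] y, hk, ⟨k, rfl⟩⟩

/-- Dense orbit implies topological transitivity (no isolated points, T1). -/
theorem ttrans_of_dense_orbit [T1Space Y] (hp : ∀ x : Y, (𝓝[≠] x).NeBot)
    {z : Y} (hz : Dense (Set.range fun k : ℕ => f^[k] z)) : TTrans f := by
  intro U V hU hUn hV hVn
  obtain ⟨-, ⟨k, rfl⟩, hkU⟩ := hz.exists_mem_open hU hUn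
  have hfin : ((fun i : ℕ => f^[i] z) '' Set.Iio k).Finite :=
    (Set.finite_Iio k).image _
  have hd2 : Dense ((Set.range fun j : ℕ => f^[j] z) \ ((fun i : ℕ => f^[i] z) '' Set.Iio k)) := by
    haveI : ∀ x : Y, (𝓝[≠] x).NeBot := hp
    exact hz.diff_finite hfin
  obtain ⟨w, ⟨⟨m, rfl⟩, hwF⟩, hwV⟩ := hd2.exists_mem_open hV hVn
  have hmk : k ≤ m := by
    by_contra h
    exact hwF ⟨m, Set.mem_Iio.mpr (Nat.lt_of_not_le h), rfl⟩
  refine ⟨m - k, f^[k] z, hkU, ?_⟩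
  show f^[m - k] (f^[k] z) ∈ V
  rw [← Function.iterate_add_apply, Nat.sub_add_cancel hmk]
  exact hwV

/-- Return-time set. -/
def NSet (f : Y → Y) (U V : Set Y) : Set ℕ := {n | (U ∩ f^[n] ⁻¹' V).Nonempty}

/-- Weak mixing hypothesis in terms of return sets. -/
def WMix (f : Y → Y) : Prop :=
  ∀ U₁ V₁ U₂ V₂ : Set Y, IsOpen U₁ → U₁.Nonempty → IsOpen V₁ → V₁.Nonempty →
    IsOpen U₂ → U₂.Nonempty → IsOpen V₂ → V₂.Nonempty →
      (NSet f U₁ V₁ ∩ NSet f U₂ V₂).Nonempty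

theorem WMix.four_set (hf : Continuous f) (hw : WMix f) {U₁ V₁ U₂ V₂ : Set Y}
    (hU₁ : IsOpen U₁) (hU₁n : U₁.Nonempty) (hV₁ : IsOpen V₁) (hV₁n : V₁.Nonempty)
    (hU₂ : IsOpen U₂) (hU₂n : U₂.Nonempty) (hV₂ : IsOpen V₂) (hV₂n : V₂.Nonempty) :
    ∃ U' V' : Set Y, IsOpen U' ∧ U'.Nonempty ∧ IsOpen V' ∧ V'.Nonempty ∧
      NSet f U' V' ⊆ NSet f U₁ V₁ ∩ NSet f U₂ V₂ := by
  obtain ⟨n, hn₁, hn₂⟩ := hw U₁ U₂ V₁ V₂ hU₁ hU₁n hU₂ hU₂n hV₁ hV₁n hV₂ hV₂n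
  refine ⟨U₁ ∩ f^[n] ⁻¹' U₂, V₁ ∩ f^[n] ⁻¹' V₂,
    hU₁.inter ((hf.iterate n).isOpen_preimage _ hU₂), hn₁,
    hV₁.inter ((hf.iterate n).isOpen_preimage _ hV₂), hn₂, ?_⟩
  rintro m ⟨x, ⟨hx₁, hx₂⟩, hfx₁, hfx₂⟩
  refine ⟨⟨x, hx₁, hfx₁⟩, ⟨f^[n] x, hx₂, ?_⟩⟩
  show f^[m] (f^[n] x) ∈ V₂
  rw [← Function.iterate_add_apply, Nat.add_comm, Function.iterate_add_apply]
  exact hfx₂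

theorem WMix.iInter_nonempty [Nonempty Y] (hf : Continuous f) (hw : WMix f) :
    ∀ (n : ℕ) (U V : Fin n → Set Y), (∀ i, IsOpen (U i)) → (∀ i, (U i).Nonempty) →
      (∀ i, IsOpen (V i)) → (∀ i, (V i).Nonempty) →
      (⋂ i, NSet f (U i) (V i)).Nonempty := by
  have key : ∀ (k : ℕ) (U V : Fin k → Set Y), (∀ i, IsOpen (U i)) → (∀ i, (U i).Nonempty) →
      (∀ i, IsOpen (V i)) → (∀ i, (V i).Nonempty) →
      ∃ U' V' : Set Y, IsOpen U' ∧ U'.Nonempty ∧ IsOpen V' ∧ V'.Nonempty ∧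
        NSet f U' V' ⊆ ⋂ i, NSet f (U i) (V i) := by
    intro k
    induction k with
    | zero =>
      intro U V _ _ _ _
      refine ⟨univ, univ, isOpen_univ, univ_nonempty, isOpen_univ, univ_nonempty, ?_⟩
      simp
    | succ l ihl =>
      intro U V hU hUn hV hVn
      obtain ⟨U₀, V₀, hU₀, hU₀n, hV₀, hV₀n, hsub₀⟩ :=
        ihl (fun i => U i.succ) (fun i => V i.succ) (fun i => hU _) (fun i => hUn _)
          (fun i => hV _) (fun i => hVn _)
      obtain ⟨U', V', hU', hU'n, hV', hV'n, hsub⟩ :=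
        hw.four_set hf (hU 0) (hUn 0) (hV 0) (hVn 0) hU₀ hU₀n hV₀ hV₀n
      refine ⟨U', V', hU', hU'n, hV', hV'n, ?_⟩
      intro j hj
      obtain ⟨hj₁, hj₂⟩ := hsub hj
      refine mem_iInter.2 fun i => ?_
      rcases Fin.eq_zero_or_eq_succ i with h0 | ⟨i', rfl⟩
      · rw [h0]; exact hj₁
      · exact mem_iInter.1 (hsub₀ hj₂) i'
  intro n U V hU hUn hV hVn
  obtain ⟨U', V', hU', hU'n, hV', hV'n, hsub⟩ := key n U V hU hUn hV hVn
  obtain ⟨j, hj, -⟩ := hw U' V' U' V' hU' hU'n hV' hV'n hU' hU'n hV' hV'n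
  exact ⟨j, hsub hj⟩

end Dyn

/-- Furstenberg's theorem in the linear setting: if `T ⊕ T` is hypercyclic,
then every `n`-fold direct sum of `T` (`n ≥ 2`) is hypercyclic on `Xⁿ`. -/
theorem stmt_5 {X : Type*} [AddCommGroup X] [Module ℝ X] [MetricSpace X]
    [CompleteSpace X] [TopologicalSpace.SeparableSpace X]
    [IsTopologicalAddGroup X] [ContinuousSMul ℝ X]
    (T : X →L[ℝ] X)
    (h2 : ∃ z : X × X, Dense (Set.range fun k : ℕ => ((T.prodMap T) ^ k) z)) :
    ∀ n : ℕ, 2 ≤ n →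
      ∃ y : Fin n → X,
        Dense (Set.range fun k : ℕ =>
          ((ContinuousLinearMap.pi fun i : Fin n =>
              T.comp (ContinuousLinearMap.proj i)) ^ k) y) := by
  intro n _
  by_cases hsub : Subsingleton X
  · refine ⟨fun _ => 0, ?_⟩
    have : (Set.range fun k : ℕ =>
        ((ContinuousLinearMap.pi fun i : Fin n =>
            T.comp (ContinuousLinearMap.proj i)) ^ k) (fun _ => 0)) = Set.univ :=
      Set.eq_univ_of_forall fun x => ⟨0, Subsingleton.elim _ _⟩
    rw [this]; exact dense_univ
  haveI : Nontrivial X := not_subsingleton_iff_nontrivial.1 hsub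
  haveI : SecondCountableTopology X := UniformSpace.secondCountable_of_separable X
  set f : X → X := fun x => T x with hf_def
  have hcont : Continuous f := T.continuous
  -- transitivity of the pair map
  set s : X × X → X × X := fun p => (f p.1, f p.2) with hs_def
  have hmap : ⇑(T.prodMap T) = s := rfl
  obtain ⟨z, hz⟩ := h2
  have hz' : Dense (Set.range fun k : ℕ => s^[k] z) := by
    have : (fun k : ℕ => ((T.prodMap T) ^ k) z) = fun k : ℕ => s^[k] z := by
      funext k
      rw [show ((T.prodMap T) ^ k) z = (⇑(T.prodMap T))^[k] z from
        congrFun (FunLike.coe_pow_eq_iterate _ k) z, hmap]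
    rwa [this] at hz
  have hpnb : ∀ x : X × X, (𝓝[≠] x).NeBot :=
    Module.punctured_nhds_neBot ℝ (X × X)
  have ht2 : TTrans s := ttrans_of_dense_orbit hpnb hz'
  -- iterates of the pair map
  have hsiter : ∀ (k : ℕ) (p : X × X), s^[k] p = (f^[k] p.1, f^[k] p.2) := by
    intro k
    induction k with
    | zero => intro p; rfl
    | succ m ih =>
      intro p
      rw [Function.iterate_succ_apply, ih, Function.iterate_succ_apply,
        Function.iterate_succ_apply]
  -- weak mixing of f
  have hw : WMix f := by
    intro U₁ V₁ U₂ V₂ hU₁ hU₁n hV₁ hV₁n hU₂ hU₂n hV₂ hV₂n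
    obtain ⟨m, p, hpU, hpV⟩ := ht2 (U₁ ×ˢ U₂) (V₁ ×ˢ V₂) (hU₁.prod hU₂)
      (hU₁n.prod hU₂n) (hV₁.prod hV₂) (hV₁n.prod hV₂n)
    have hpV' : (f^[m] p.1, f^[m] p.2) ∈ V₁ ×ˢ V₂ := by
      rw [← hsiter m p]; exact hpV
    exact ⟨m, ⟨p.1, hpU.1, hpV'.1⟩, ⟨p.2, hpU.2, hpV'.2⟩⟩
  -- the n-fold map
  set g : (Fin n → X) → (Fin n → X) := fun y i => f (y i) with hg_def
  have hgcont : Continuous g := continuous_pi fun i => hcont.comp (continuous_apply i)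
  have hgiter : ∀ (k : ℕ) (y : Fin n → X), g^[k] y = fun i => f^[k] (y i) := by
    intro k
    induction k with
    | zero => intro y; rfl
    | succ m ih =>
      intro y
      rw [Function.iterate_succ_apply, ih]
      funext i
      rw [Function.iterate_succ_apply]
  have hgtrans : TTrans g := by
    intro U V hU hUn hV hVn
    obtain ⟨u, hu⟩ := hUn
    obtain ⟨v, hv⟩ := hVn
    obtain ⟨I, Us, hUs, hUsub⟩ := isOpen_pi_iff.1 hU u hu
    obtain ⟨J, Vs, hVs, hVsub⟩ := isOpen_pi_iff.1 hV v hv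
    set U' : Fin n → Set X := fun i => if i ∈ I then Us i else univ with hU'_def
    set V' : Fin n → Set X := fun i => if i ∈ J then Vs i else univ with hV'_def
    have hU'o : ∀ i, IsOpen (U' i) := by
      intro i; rw [hU'_def]; dsimp only
      split
      · exact (hUs i ‹_›).1
      · exact isOpen_univ
    have hV'o : ∀ i, IsOpen (V' i) := by
      intro i; rw [hV'_def]; dsimp only
      split
      · exact (hVs i ‹_›).1
      · exact isOpen_univ
    have hU'n : ∀ i, (U' i).Nonempty := by
      intro i; refine ⟨u i, ?_⟩; rw [hU'_def]; dsimp only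
      split
      · exact (hUs i ‹_›).2
      · trivial
    have hV'n : ∀ i, (V' i).Nonempty := by
      intro i; refine ⟨v i, ?_⟩; rw [hV'_def]; dsimp only
      split
      · exact (hVs i ‹_›).2
      · trivial
    obtain ⟨m, hm⟩ := hw.iInter_nonempty hcont n U' V' hU'o hU'n hV'o hV'n
    choose x hxU hxV using fun i => (mem_iInter.1 hm i : (U' i ∩ f^[m] ⁻¹' V' i).Nonempty)
    have hxU' : ∀ i, x i ∈ U' i := hxU
    have hxV' : ∀ i, f^[m] (x i) ∈ V' i := hxV
    refine ⟨m, fun i => x i, ?_, ?_⟩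
    · apply hUsub
      intro i hi
      have := hxU' i
      rw [hU'_def] at this; dsimp only at this
      rwa [if_pos (Finset.mem_coe.1 hi)] at this
    · show g^[m] (fun i => x i) ∈ V
      rw [hgiter]
      apply hVsub
      intro i hi
      have := hxV' i
      rw [hV'_def] at this; dsimp only at this
      rwa [if_pos (Finset.mem_coe.1 hi)] at this
  -- Birkhoff on Xⁿ
  haveI : Nonempty (Fin n → X) := ⟨fun _ => 0⟩
  obtain ⟨y, hy⟩ := hgtrans.exists_dense_orbit hgcont
  refine ⟨y, ?_⟩
  have hPg : ⇑(ContinuousLinearMap.pi fun i : Fin n =>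
      T.comp (ContinuousLinearMap.proj i)) = g := rfl
  have : (fun k : ℕ =>
      ((ContinuousLinearMap.pi fun i : Fin n =>
          T.comp (ContinuousLinearMap.proj i)) ^ k) y) = fun k : ℕ => g^[k] y := by
    funext k
    rw [show ((ContinuousLinearMap.pi fun i : Fin n =>
        T.comp (ContinuousLinearMap.proj i)) ^ k) y =
        (⇑(ContinuousLinearMap.pi fun i : Fin n =>
          T.comp (ContinuousLinearMap.proj i)))^[k] y from
      congrFun (FunLike.coe_pow_eq_iterate _ k) y, hPg]
  rw [this]
  exact hy
end
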